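/- (Valley-filling) Let ĥ in N^T be sorted in non-increasing order and τ a nonnegative integer. Define v = min{ x in N : Σ_{j=1}^T [x − ĥ_j]^+ ≥ τ }, and let h̃ be obtained from ĥ by first replacing every entry less than v by v, and then decreasing each of the last (Σ_{j=1}^T [v − ĥ_j]^+ − τ) entries by one. Then h̃ is majorized by ĥ + b for every b in N^T with ||b||_1 = τ. -/

import Mathlib

open Finset


/-- Sum of the `k` largest entries of `x` (padding with zeros if `k` exceeds the length). -/
def topSum {N : ℕ} (x : Fin N → ℕ) (k : ℕ) : ℕ :=
  (Finset.univ.powerset.filter (fun S : Finset (Fin N) => S.card ≤ k)).sup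
    (fun S => ∑ i ∈ S, x i)

lemma card_suffix (T a : ℕ) (ha : a ≤ T) :
    (univ.filter (fun j : Fin T => a ≤ (j:ℕ))).card = T - a := by
  have : (univ.filter (fun j : Fin T => a ≤ (j:ℕ)))
      = Finset.map ⟨fun i : Fin (T - a) => (⟨a + i, by omega⟩ : Fin T),
          by intro i i' h; simpa [Fin.ext_iff] using h⟩ univ := by
    ext j
    simp only [mem_filter, mem_univ, true_and, Finset.mem_map, Function.Embedding.coeFn_mk]
    constructor
    · intro hj; exact ⟨⟨(j:ℕ) - a, by omega⟩, Fin.ext (by show a + ((j:ℕ) - a) = (j:ℕ); omega)⟩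
    · rintro ⟨i, rfl⟩; show a ≤ a + (i:ℕ); omega
  rw [this, Finset.card_map, card_univ, Fintype.card_fin]

lemma le_topSum' {N : ℕ} (x : Fin N → ℕ) (k : ℕ) (S : Finset (Fin N)) (hS : S.card ≤ k) :
    ∑ j ∈ S, x j ≤ topSum x k := by
  unfold topSum
  exact Finset.le_sup (f := fun S => ∑ i ∈ S, x i)
    (by simp [Finset.mem_filter, Finset.mem_powerset, hS])

lemma strictmono_le_val {n m : ℕ} (f : Fin n → Fin m) (h : StrictMono f) :
    ∀ N : ℕ, ∀ i : Fin n, (i:ℕ) = N → N ≤ (f i : ℕ) := by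
  intro N
  induction N with
  | zero => intro i _; omega
  | succ N ih =>
    intro i hi
    have hN : N < n := by omega
    have h1 : (⟨N, hN⟩ : Fin n) < i := by rw [Fin.lt_def]; simp; omega
    have h2 := ih ⟨N, hN⟩ rfl
    have h3 := h h1
    rw [Fin.lt_def] at h3
    omega

lemma sum_le_prefix {T : ℕ} (x : Fin T → ℕ) (hx : Antitone x) (k : ℕ) (hkT : k ≤ T)
    (S : Finset (Fin T)) (hS : S.card ≤ k) :
    ∑ j ∈ S, x j ≤ ∑ j ∈ univ.filter (fun j : Fin T => (j:ℕ) < k), x j := by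
  classical
  have hcT : S.card ≤ T := hS.trans hkT
  set c := S.card with hc
  let f : Fin c → Fin T := fun i => S.orderEmbOfFin (rfl : S.card = c) i
  have hmono : StrictMono f := (S.orderEmbOfFin rfl).strictMono
  have hle : ∀ i : Fin c, (i : ℕ) ≤ (f i : ℕ) := fun i => strictmono_le_val f hmono (i:ℕ) i rfl
  have himg : Finset.image f univ = S := by
    ext j
    simp only [Finset.mem_image, mem_univ, true_and]
    constructor
    · rintro ⟨i, rfl⟩; exact Finset.orderEmbOfFin_mem S rfl i
    · intro hj
      have : j ∈ (↑S : Set (Fin T)) := hj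
      rw [← Finset.range_orderEmbOfFin S (rfl : S.card = c)] at this
      obtain ⟨i, hi⟩ := this
      exact ⟨i, hi⟩
  have h1 : ∑ j ∈ S, x j = ∑ i : Fin c, x (f i) := by
    rw [← himg, Finset.sum_image (by intro a _ b _ h; exact hmono.injective h)]
  rw [h1]
  have h2 : ∑ i : Fin c, x (f i) ≤ ∑ i : Fin c, x (⟨(i:ℕ), lt_of_lt_of_le i.2 hcT⟩ : Fin T) := by
    apply Finset.sum_le_sum
    intro i _
    exact hx (by rw [Fin.le_def]; exact hle i)
  refine h2.trans ?_
  let g : Fin c → Fin T := fun i => (⟨(i:ℕ), lt_of_lt_of_le i.2 hcT⟩ : Fin T)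
  have himg2 : Finset.image g univ = univ.filter (fun j : Fin T => (j:ℕ) < c) := by
    ext j
    simp only [Finset.mem_image, mem_univ, true_and, mem_filter, g]
    constructor
    · rintro ⟨i, rfl⟩; exact i.2
    · intro hj; exact ⟨⟨(j:ℕ), hj⟩, by simp⟩
  have h3 : ∑ i : Fin c, x (g i) = ∑ j ∈ univ.filter (fun j : Fin T => (j:ℕ) < c), x j := by
    rw [← himg2, Finset.sum_image (by intro a _ b _ h; simpa [g, Fin.ext_iff] using h)]
  rw [show (∑ i : Fin c, x (⟨(i:ℕ), lt_of_lt_of_le i.2 hcT⟩ : Fin T)) = ∑ i : Fin c, x (g i) from rfl, h3]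
  apply Finset.sum_le_sum_of_subset
  intro j hj
  simp only [mem_filter, mem_univ, true_and] at *
  omega

lemma exists_small_subset {α : Type*} [DecidableEq α] (S : Finset α) (c : α → ℤ) (s q : ℕ)
    (hq : q ≤ S.card) (hsum : ∑ j ∈ S, c j ≤ (S.card : ℤ) - s) :
    ∃ R, R ⊆ S ∧ R.card = q ∧ ∑ j ∈ R, c j ≤ max ((q:ℤ) - s) 0 := by
  classical
  obtain ⟨R0, hR0S, hR0card⟩ := Finset.exists_subset_card_eq hq
  have hne : (S.powerset.filter (fun R => R.card = q)).Nonempty :=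
    ⟨R0, by simp [Finset.mem_filter, Finset.mem_powerset, hR0S, hR0card]⟩
  obtain ⟨R, hRmem, hRmin⟩ := Finset.exists_min_image _ (fun R => ∑ j ∈ R, c j) hne
  simp only [Finset.mem_filter, Finset.mem_powerset] at hRmem
  obtain ⟨hRS, hRcard⟩ := hRmem
  refine ⟨R, hRS, hRcard, ?_⟩
  by_contra hcon
  push_neg at hcon
  -- ∑_R c ≥ 1, so some element of R has c ≥ 1
  have hpos : (1:ℤ) ≤ ∑ j ∈ R, c j := by
    have : (0:ℤ) ≤ max ((q:ℤ) - s) 0 := le_max_right _ _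
    omega
  have hex : ∃ j0 ∈ R, (1:ℤ) ≤ c j0 := by
    by_contra hall
    push_neg at hall
    have : ∑ j ∈ R, c j ≤ 0 := Finset.sum_nonpos (fun j hj => by have := hall j hj; omega)
    omega
  obtain ⟨j0, hj0R, hj0⟩ := hex
  -- swap property: every j' outside R has c j' ≥ c j0 ≥ 1
  have hswap : ∀ j' ∈ S \ R, (1:ℤ) ≤ c j' := by
    intro j' hj'
    rw [Finset.mem_sdiff] at hj'
    obtain ⟨hj'S, hj'R⟩ := hj'
    set R' := insert j' (R.erase j0) with hR'
    have hR'S : R' ⊆ S := by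
      intro a ha
      rw [hR', Finset.mem_insert] at ha
      rcases ha with rfl | ha
      · exact hj'S
      · exact hRS (Finset.erase_subset _ _ ha)
    have hR'card : R'.card = q := by
      rw [hR', Finset.card_insert_of_notMem (fun h => hj'R (Finset.erase_subset _ _ h)),
        Finset.card_erase_of_mem hj0R, hRcard]
      have : 1 ≤ q := by rw [← hRcard]; exact Finset.card_pos.mpr ⟨j0, hj0R⟩
      omega
    have hmin := hRmin R' (by simp [Finset.mem_filter, Finset.mem_powerset, hR'S, hR'card])
    have hsum' : ∑ j ∈ R', c j = c j' + (∑ j ∈ R, c j - c j0) := by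
      rw [hR', Finset.sum_insert (fun h => hj'R (Finset.erase_subset _ _ h)),
        Finset.sum_erase_eq_sub hj0R]
    omega
  have hsplit : ∑ j ∈ S \ R, c j + ∑ j ∈ R, c j = ∑ j ∈ S, c j := Finset.sum_sdiff hRS
  have hlow : ((S \ R).card : ℤ) ≤ ∑ j ∈ S \ R, c j := by
    calc ((S \ R).card : ℤ) = ∑ _j ∈ S \ R, (1:ℤ) := by simp
    _ ≤ ∑ j ∈ S \ R, c j := Finset.sum_le_sum hswap
  have hcard' : (S \ R).card = S.card - q := by
    rw [Finset.card_sdiff_of_subset hRS, hRcard]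
  have hqS : q ≤ S.card := hq
  have h1 : max ((q:ℤ) - s) 0 < ∑ j ∈ R, c j := hcon
  have h2 : ((q:ℤ) - s) ≤ max ((q:ℤ) - s) 0 := le_max_left _ _
  have h3 : ((S \ R).card : ℤ) = (S.card : ℤ) - q := by rw [hcard']; push_cast [hqS]; ring
  omega


/-- Valley-filling: the vector `htil`, obtained from the non-increasing vector `hhat` by
raising all entries below the minimal level `v` (at which `∑ [v - hhat j]⁺ ≥ τ`) up to `v`
and then decreasing each of the last `∑ [v - hhat j]⁺ - τ` entries by one, is majorized by
`hhat + b` for every nonnegative integer vector `b` with `‖b‖₁ = τ`. -/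
theorem valley_filling (T : ℕ) (hhat : Fin T → ℕ) (hanti : Antitone hhat) (τ : ℕ)
    (v : ℕ) (hv : IsLeast {x : ℕ | τ ≤ ∑ j, (x - hhat j)} v)
    (s : ℕ) (hs : s = (∑ j, (v - hhat j)) - τ)
    (htil : Fin T → ℕ)
    (hdef : ∀ j : Fin T, htil j = max (hhat j) v - (if T - s ≤ (j : ℕ) then 1 else 0))
    (b : Fin T → ℕ) (hb : ∑ j, b j = τ) :
    (∀ k, topSum htil k ≤ topSum (fun j => hhat j + b j) k) ∧
      (∑ j, htil j = ∑ j, (hhat j + b j)) := by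
  classical
  obtain ⟨hv1, hv2⟩ := hv
  simp only [Set.mem_setOf_eq] at hv1
  by_cases hv0 : v = 0
  · subst hv0
    have hz : ∑ j : Fin T, (0 - hhat j) = 0 := by simp
    rw [hz] at hv1
    have hτ0 : τ = 0 := by omega
    subst hτ0
    have hs0 : s = 0 := by rw [hs, hz]
    have hb0 : ∀ j, b j = 0 := by
      intro j
      have := Finset.sum_eq_zero_iff.mp hb j (mem_univ j)
      exact this
    have heq : htil = fun j => hhat j + b j := by
      funext j
      rw [hdef j, hb0 j]
      have h1 : ¬ (T - s ≤ (j:ℕ)) := by have := j.2; omega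
      simp [h1]
    rw [heq]
    exact ⟨fun k => le_refl _, rfl⟩
  -- v ≥ 1 branch
  have hv1' : 1 ≤ v := by omega
  set E := univ.filter (fun j : Fin T => hhat j < v) with hEdef
  set m := E.card with hmdef
  have hmT : m ≤ T := by
    calc m ≤ (univ : Finset (Fin T)).card := Finset.card_le_card (filter_subset _ _)
    _ = T := by rw [card_univ, Fintype.card_fin]
  have hτpos : 1 ≤ τ := by
    by_contra h
    have hτ0 : τ = 0 := by omega
    have := hv2 (show (0:ℕ) ∈ {x : ℕ | τ ≤ ∑ j, (x - hhat j)} from by simp [hτ0])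
    omega
  have hmin1 : ∑ j, ((v-1) - hhat j) < τ := by
    by_contra h
    push_neg at h
    have := hv2 (show (v-1) ∈ {x : ℕ | τ ≤ ∑ j, (x - hhat j)} from h)
    omega
  have hsum : ∑ j, (v - hhat j) = τ + s := by omega
  have hcnt : ∑ j : Fin T, (if hhat j < v then (1:ℕ) else 0) = m := by
    rw [Finset.sum_boole, Nat.cast_id, hmdef]
  have hsm : s < m := by
    have hpt : ∀ j ∈ (univ : Finset (Fin T)),
        (v - hhat j) ≤ ((v-1) - hhat j) + (if hhat j < v then 1 else 0) := by
      intro j _; split <;> omega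
    have h1 := Finset.sum_le_sum hpt
    rw [Finset.sum_add_distrib, hcnt] at h1
    omega
  have hsmm : s ≤ m := le_of_lt hsm
  have hEchar : ∀ j : Fin T, hhat j < v ↔ T - m ≤ (j:ℕ) := by
    intro j
    constructor
    · intro hj
      have hsub : univ.filter (fun j' : Fin T => (j:ℕ) ≤ (j':ℕ)) ⊆ E := by
        intro j' hj'
        simp only [mem_filter, mem_univ, true_and] at hj'
        simp only [hEdef, mem_filter, mem_univ, true_and]
        exact lt_of_le_of_lt (hanti (by rw [Fin.le_def]; omega)) hj
      have hc := Finset.card_le_card hsub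
      rw [card_suffix T (j:ℕ) (le_of_lt j.2)] at hc
      have := j.2
      omega
    · intro hj
      by_contra hge
      push_neg at hge
      have hsub : E ⊆ univ.filter (fun j' : Fin T => (j:ℕ)+1 ≤ (j':ℕ)) := by
        intro j' hj'
        simp only [hEdef, mem_filter, mem_univ, true_and] at hj'
        simp only [mem_filter, mem_univ, true_and]
        by_contra hle
        push_neg at hle
        have : hhat j ≤ hhat j' := hanti (by rw [Fin.le_def]; omega)
        omega
      have hc := Finset.card_le_card hsub
      rw [card_suffix T ((j:ℕ)+1) (by have := j.2; omega)] at hc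
      have := j.2
      omega
  have htil_low : ∀ j : Fin T, T - s ≤ (j:ℕ) → hhat j < v := by
    intro j hj
    exact (hEchar j).mpr (by omega)
  have hmax : ∀ j : Fin T, max (hhat j) v = hhat j + (v - hhat j) := fun j => by omega
  have hpt : ∀ j : Fin T, htil j + (if T - s ≤ (j:ℕ) then 1 else 0) = max (hhat j) v := by
    intro j
    rw [hdef j]
    split
    case isTrue h => have h2 := htil_low j h; omega
    case isFalse h => omega
  have hδuniv : ∑ j : Fin T, (if T - s ≤ (j:ℕ) then (1:ℕ) else 0) = s := by
    rw [Finset.sum_boole, Nat.cast_id]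
    rw [card_suffix T (T-s) (by omega)]
    omega
  have htot : ∑ j, htil j = ∑ j, (hhat j + b j) := by
    have h1 : ∑ j : Fin T, (htil j + (if T - s ≤ (j:ℕ) then 1 else 0))
        = ∑ j : Fin T, (hhat j + (v - hhat j)) := by
      apply Finset.sum_congr rfl
      intro j _
      rw [hpt j, hmax j]
    rw [Finset.sum_add_distrib, Finset.sum_add_distrib, hδuniv, hsum] at h1
    rw [Finset.sum_add_distrib, hb]
    omega
  refine ⟨?_, htot⟩
  intro k
  by_cases hkT : T ≤ k
  · have h1 : topSum htil k ≤ ∑ j, htil j := by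
      unfold topSum
      apply Finset.sup_le
      intro S _
      exact Finset.sum_le_sum_of_subset (Finset.subset_univ S)
    have h2 : ∑ j, (hhat j + b j) ≤ topSum (fun j => hhat j + b j) k :=
      le_topSum' _ k univ (by rw [card_univ, Fintype.card_fin]; exact hkT)
    omega
  push_neg at hkT
  set Pre := univ.filter (fun j : Fin T => (j:ℕ) < k) with hPredef
  set Suf := univ.filter (fun j : Fin T => k ≤ (j:ℕ)) with hSufdef
  have hSufcard : Suf.card = T - k := card_suffix T k (le_of_lt hkT)
  have hPS : ∀ y : Fin T → ℕ, ∑ j ∈ Pre, y j + ∑ j ∈ Suf, y j = ∑ j, y j := by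
    intro y
    rw [hPredef, hSufdef]
    rw [show (univ.filter (fun j : Fin T => k ≤ (j:ℕ))) = (univ.filter (fun j : Fin T => ¬ (j:ℕ) < k)) from
      Finset.filter_congr (fun j _ => by omega)]
    exact Finset.sum_filter_add_sum_filter_not univ _ y
  have hPrecard : Pre.card ≤ k := by
    have h1 : Pre.card + Suf.card = T := by
      have := hPS (fun _ => 1)
      simpa [Finset.sum_const] using this
    omega
  have htilanti : Antitone htil := by
    intro j j' hjj'
    rw [hdef j, hdef j']
    have h1 : max (hhat j') v ≤ max (hhat j) v := max_le_max (hanti hjj') le_rfl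
    have h2 : (j:ℕ) ≤ (j':ℕ) := hjj'
    split
    case isTrue h3 =>
      split
      case isTrue h4 =>
        have e1 : max (hhat j) v = v := max_eq_right (le_of_lt (htil_low j (by omega)))
        have e2 : max (hhat j') v = v := max_eq_right (le_of_lt (htil_low j' h3))
        omega
      case isFalse h4 => omega
    case isFalse h3 =>
      split
      case isTrue h4 => omega
      case isFalse h4 => omega
  have hTop1 : topSum htil k ≤ ∑ j ∈ Pre, htil j := by
    unfold topSum
    apply Finset.sup_le
    intro S hS
    simp only [Finset.mem_filter, Finset.mem_powerset] at hS
    exact sum_le_prefix htil htilanti k (le_of_lt hkT) S hS.2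
  have hTop2y : ∀ S : Finset (Fin T), S.card ≤ k →
      ∑ j ∈ S, (hhat j + b j) ≤ topSum (fun j => hhat j + b j) k := fun S hS =>
    le_topSum' (fun j => hhat j + b j) k S hS
  by_cases hk2 : hhat ⟨k, hkT⟩ < v
  · -- subcase B
    have hSufE : Suf ⊆ E := by
      intro j hj
      rw [hSufdef, mem_filter] at hj
      simp only [mem_univ, true_and] at hj
      rw [hEdef, mem_filter]
      refine ⟨mem_univ j, lt_of_le_of_lt (hanti ?_) hk2⟩
      rw [Fin.le_def]
      simpa using hj
    have hqm : T - k ≤ m := by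
      rw [← hSufcard, hmdef]
      exact Finset.card_le_card hSufE
    set c : Fin T → ℤ := fun j => (b j : ℤ) + (hhat j : ℤ) + 1 - (v:ℤ) with hcdef
    have hEv : ∑ j ∈ E, (v - hhat j) = τ + s := by
      rw [← hsum]
      apply Finset.sum_subset (Finset.subset_univ E)
      intro j _ hj
      rw [hEdef, mem_filter] at hj
      simp only [mem_univ, true_and] at hj
      omega
    have hEvZ : ∑ j ∈ E, ((v:ℤ) - (hhat j : ℤ)) = (τ:ℤ) + (s:ℤ) := by
      have he : ∑ j ∈ E, ((v:ℤ) - (hhat j:ℤ)) = ((∑ j ∈ E, (v - hhat j) : ℕ) : ℤ) := by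
        rw [Nat.cast_sum]
        apply Finset.sum_congr rfl
        intro j hj
        rw [hEdef, mem_filter] at hj
        rw [Nat.cast_sub (le_of_lt hj.2)]
      rw [he, hEv]
      push_cast
      ring
    have hbE : (∑ j ∈ E, (b j : ℤ)) ≤ (τ : ℤ) := by
      have h0 : ∑ j ∈ E, b j ≤ τ := by
        rw [← hb]; exact Finset.sum_le_sum_of_subset (Finset.subset_univ E)
      calc ∑ j ∈ E, (b j : ℤ) = ((∑ j ∈ E, b j : ℕ) : ℤ) := by rw [Nat.cast_sum]
      _ ≤ (τ:ℤ) := by exact_mod_cast h0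
    have hcE : ∑ j ∈ E, c j ≤ ((E.card):ℤ) - (s:ℤ) := by
      have h1 : ∑ j ∈ E, c j = ∑ j ∈ E, (b j:ℤ) + (∑ j ∈ E, ((1:ℤ) - ((v:ℤ) - (hhat j:ℤ)))) := by
        rw [← Finset.sum_add_distrib]
        apply Finset.sum_congr rfl
        intro j _
        rw [hcdef]
        ring
      have h2 : ∑ j ∈ E, ((1:ℤ) - ((v:ℤ) - (hhat j:ℤ))) = (E.card : ℤ) - ((τ:ℤ) + s) := by
        rw [Finset.sum_sub_distrib, hEvZ, Finset.sum_const, nsmul_eq_mul, mul_one]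
      rw [h1, h2]
      omega
    obtain ⟨R, hRE, hRcard, hRsum⟩ := exists_small_subset E c s (T-k) hqm hcE
    have hRv : ∀ j ∈ R, hhat j < v := by
      intro j hj
      have := hRE hj
      rw [hEdef, mem_filter] at this
      exact this.2
    have hZ : ((∑ j ∈ R, (hhat j + b j) : ℕ) : ℤ)
        ≤ ((T-k:ℕ):ℤ) * ((v:ℤ)-1) + max (((T-k:ℕ):ℤ) - (s:ℤ)) 0 := by
      have h1 : ∀ j ∈ R, ((hhat j + b j : ℕ) : ℤ) = ((v:ℤ) - 1) + c j := by
        intro j hj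
        rw [hcdef]
        push_cast
        ring
      calc ((∑ j ∈ R, (hhat j + b j) : ℕ) : ℤ) = ∑ j ∈ R, ((hhat j + b j : ℕ) : ℤ) := by
            rw [Nat.cast_sum]
      _ = ∑ j ∈ R, (((v:ℤ)-1) + c j) := Finset.sum_congr rfl h1
      _ = (R.card : ℤ) * ((v:ℤ)-1) + ∑ j ∈ R, c j := by
            rw [Finset.sum_add_distrib, Finset.sum_const, nsmul_eq_mul]
      _ ≤ ((T-k:ℕ):ℤ) * ((v:ℤ)-1) + max (((T-k:ℕ):ℤ) - (s:ℤ)) 0 := by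
            rw [hRcard]
            exact add_le_add_right hRsum _
    have hq1 : (((T-k)*(v-1) : ℕ) : ℤ) = ((T-k:ℕ):ℤ) * ((v:ℤ)-1) := by
      push_cast [Nat.cast_sub hv1']
      ring
    rw [← hq1] at hZ
    have hRy : ∑ j ∈ R, (hhat j + b j) ≤ (T-k)*(v-1) + ((T-k) - s) := by omega
    have hSufhtil : ∑ j ∈ Suf, htil j + min (T-k) s = (T-k) * v := by
      have hS1 : ∑ j ∈ Suf, (htil j + (if T - s ≤ (j:ℕ) then 1 else 0)) = ∑ _j ∈ Suf, v := by
        apply Finset.sum_congr rfl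
        intro j hj
        rw [hpt j]
        have hjE := hSufE hj
        rw [hEdef, mem_filter] at hjE
        exact max_eq_right (le_of_lt hjE.2)
      rw [Finset.sum_add_distrib, Finset.sum_const, hSufcard, smul_eq_mul] at hS1
      have hS2 : ∑ j ∈ Suf, (if T - s ≤ (j:ℕ) then (1:ℕ) else 0) = min (T-k) s := by
        rw [Finset.sum_boole, Nat.cast_id]
        rw [hSufdef, Finset.filter_filter]
        rw [show (univ.filter (fun j : Fin T => k ≤ (j:ℕ) ∧ T - s ≤ (j:ℕ)))
            = univ.filter (fun j : Fin T => max k (T-s) ≤ (j:ℕ)) from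
          Finset.filter_congr (fun j _ => by constructor <;> intro h <;> omega)]
        rw [card_suffix T (max k (T-s)) (by omega)]
        omega
      rw [← hS2]
      exact hS1
    have hTop2 : ∑ j ∈ univ \ R, (hhat j + b j) ≤ topSum (fun j => hhat j + b j) k := by
      apply hTop2y
      rw [Finset.card_sdiff_of_subset (Finset.subset_univ R), card_univ, Fintype.card_fin, hRcard]
      omega
    have hsdiff : ∑ j ∈ univ \ R, (hhat j + b j) + ∑ j ∈ R, (hhat j + b j)
        = ∑ j, (hhat j + b j) := Finset.sum_sdiff (Finset.subset_univ R)
    have hlink : (T-k) * v = (T-k)*(v-1) + (T-k) := by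
      have hvv : v - 1 + 1 = v := by omega
      calc (T-k)*v = (T-k)*((v-1)+1) := by rw [hvv]
      _ = (T-k)*(v-1) + (T-k) := by ring
    have h1 := hPS htil
    set A := (T-k)*v with hA
    set B := (T-k)*(v-1) with hB
    omega
  · -- subcase A : v ≤ hhat ⟨k,_⟩
    push_neg at hk2
    have hksmall : ∀ j : Fin T, (j:ℕ) < k → v ≤ hhat j := by
      intro j hj
      exact le_trans hk2 (hanti (by rw [Fin.le_def]; simp; omega))
    have hsplitA : ∑ j ∈ Suf, htil j + ∑ j ∈ Suf, (if T - s ≤ (j:ℕ) then 1 else 0)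
        = ∑ j ∈ Suf, hhat j + ∑ j ∈ Suf, (v - hhat j) := by
      rw [← Finset.sum_add_distrib, ← Finset.sum_add_distrib]
      exact Finset.sum_congr rfl (fun j _ => by rw [hpt j, hmax j])
    have hδA : ∑ j ∈ Suf, (if T - s ≤ (j:ℕ) then (1:ℕ) else 0) = s := by
      have he : ∑ j ∈ Suf, (if T - s ≤ (j:ℕ) then (1:ℕ) else 0)
          = ∑ j : Fin T, (if T - s ≤ (j:ℕ) then (1:ℕ) else 0) := by
        apply Finset.sum_subset (Finset.subset_univ Suf)
        intro j _ hj
        rw [hSufdef, mem_filter] at hj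
        simp only [mem_univ, true_and] at hj
        push_neg at hj
        have hvle : v ≤ hhat j := hksmall j hj
        have hnot : ¬ (T - s ≤ (j:ℕ)) := fun hc => absurd (htil_low j hc) (by omega)
        simp [hnot]
      rw [he, hδuniv]
    have hvhA : ∑ j ∈ Suf, (v - hhat j) = τ + s := by
      rw [← hsum]
      apply Finset.sum_subset (Finset.subset_univ Suf)
      intro j _ hj
      rw [hSufdef, mem_filter] at hj
      simp only [mem_univ, true_and] at hj
      push_neg at hj
      have := hksmall j hj
      omega
    have hbA : ∑ j ∈ Suf, b j ≤ τ := by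
      rw [← hb]
      exact Finset.sum_le_sum_of_subset (Finset.subset_univ Suf)
    have hyA : ∑ j ∈ Suf, (hhat j + b j) ≤ ∑ j ∈ Suf, htil j := by
      rw [Finset.sum_add_distrib]
      omega
    have h1 := hPS htil
    have h2 := hPS (fun j => hhat j + b j)
    have h3 := hTop2y Pre hPrecard
    omega
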